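/- Let τ₁, ..., τ_n (n ≥ 2) be i.i.d. nonnegative integer-valued random variables with finite mean μ = E[τ₁]. Let G_t = Σ_{s=1}^{t-1} 1{s + τ_s ≥ t} and G*_n = max_{1 ≤ t ≤ n} G_t. Then E[G*_n] ≤ μ + 2·log n + √(4·μ·log n) + 1. -/

import Mathlib

open MeasureTheory ProbabilityTheory

section AuxLemmas

private lemma log_pade' {u : ℝ} (hu : 0 ≤ u) : 2*u/(2+u) ≤ Real.log (1+u) := by
  have key : MonotoneOn (fun u : ℝ => Real.log (1+u) - 2*u/(2+u)) (Set.Ici 0) := by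
    have hderiv : ∀ v ∈ interior (Set.Ici (0:ℝ)), 0 ≤ deriv (fun u : ℝ => Real.log (1+u) - 2*u/(2+u)) v := by
      intro v hv
      rw [interior_Ici] at hv
      have hv' : (0:ℝ) < v := hv
      have h1 : HasDerivAt (fun u : ℝ => Real.log (1+u)) (1/(1+v)) v := by
        have : HasDerivAt (fun u : ℝ => 1+u) 1 v := (hasDerivAt_id v).const_add 1
        simpa using this.log (by positivity)
      have h2 : HasDerivAt (fun u : ℝ => 2*u/(2+u)) (4/(2+v)^2) v := by
        have ha : HasDerivAt (fun u : ℝ => 2*u) 2 v := by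
          simpa using (hasDerivAt_id v).const_mul (2:ℝ)
        have hb : HasDerivAt (fun u : ℝ => 2+u) 1 v := (hasDerivAt_id v).const_add 2
        have := ha.div hb (by positivity)
        exact this.congr_deriv (by ring)
      have h3 : HasDerivAt (fun u : ℝ => Real.log (1+u) - 2*u/(2+u)) (1/(1+v) - 4/(2+v)^2) v :=
        h1.sub h2
      rw [h3.deriv]
      rw [div_sub_div _ _ (by positivity) (by positivity), le_div_iff₀ (by positivity)]
      nlinarith [sq_nonneg v]
    apply monotoneOn_of_deriv_nonneg (convex_Ici 0)
    · apply ContinuousOn.sub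
      · exact (Real.continuousOn_log.comp (by fun_prop)
          (by intro x hx; simp at hx ⊢; nlinarith)).congr (fun x hx => rfl)
      · apply ContinuousOn.div (by fun_prop) (by fun_prop)
        intro x hx; simp at hx; nlinarith
    · apply DifferentiableOn.sub
      · intro x hx
        rw [interior_Ici] at hx
        refine DifferentiableAt.differentiableWithinAt ?_
        have : HasDerivAt (fun u : ℝ => Real.log (1+u)) (1/(1+x)) x := by
          have : HasDerivAt (fun u : ℝ => 1+u) 1 x := (hasDerivAt_id x).const_add 1
          simpa using this.log (by simp at hx; positivity)
        exact this.differentiableAt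
      · intro x hx
        rw [interior_Ici] at hx
        refine DifferentiableAt.differentiableWithinAt ?_
        apply DifferentiableAt.div (by fun_prop) (by fun_prop)
        simp at hx; positivity
    · exact hderiv
  have := key (Set.self_mem_Ici) hu hu
  simp at this
  linarith

private lemma exponent_bound' {m b : ℝ} (hm : 0 < m) (hb : 0 < b) :
    m * (Real.exp (Real.log (1 + (b + Real.sqrt (2*m*b))/m)) - 1)
      - Real.log (1 + (b + Real.sqrt (2*m*b))/m) * (m + (b + Real.sqrt (2*m*b))) ≤ -b := by
  set p := Real.sqrt (2*m*b) with hp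
  have hp0 : 0 ≤ p := Real.sqrt_nonneg _
  have hp2 : p^2 = 2*m*b := Real.sq_sqrt (by positivity)
  set x := b + p with hx
  have hx0 : 0 < x := by positivity
  have hu0 : 0 < 1 + x/m := by positivity
  rw [Real.exp_log hu0]
  have hlam : 2*(x/m)/(2+x/m) ≤ Real.log (1 + x/m) := log_pade' (by positivity)
  have h2 : 2*(x/m)/(2+x/m) = 2*x/(2*m+x) := by
    field_simp
  have hkey : x + b ≤ (2*x/(2*m+x)) * (m + x) := by
    rw [div_mul_eq_mul_div, le_div_iff₀ (by positivity)]
    nlinarith [mul_nonneg hb.le hp0]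
  have hm' : m * (1 + x/m - 1) = x := by field_simp; ring
  have : x + b ≤ Real.log (1 + x/m) * (m + x) := by
    calc x + b ≤ (2*x/(2*m+x)) * (m + x) := hkey
    _ ≤ Real.log (1 + x/m) * (m + x) := by
        apply mul_le_mul_of_nonneg_right _ (by positivity)
        rw [← h2]; exact hlam
  linarith [hm'.le, hm'.ge, this]

private lemma count_bound' (t c : ℕ) :
    (∑ s ∈ Finset.Icc 1 (t-1), if t ≤ s + c then 1 else 0) ≤ c := by
  classical
  have h : (∑ s ∈ Finset.Icc 1 (t-1), if t ≤ s + c then 1 else 0)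
      = ((Finset.Icc 1 (t-1)).filter (fun s => t ≤ s + c)).card := by
    rw [Finset.card_filter]
  rw [h]
  rcases Nat.eq_zero_or_pos t with ht | ht
  · subst ht; simp
  calc ((Finset.Icc 1 (t-1)).filter (fun s => t ≤ s + c)).card
      ≤ (Finset.Icc (t-c) (t-1)).card := by
        apply Finset.card_le_card
        intro s hs
        simp only [Finset.mem_filter, Finset.mem_Icc] at hs ⊢
        exact ⟨Nat.sub_le_iff_le_add.mpr hs.2, hs.1.2⟩
    _ = (t-1) + 1 - (t-c) := Nat.card_Icc _ _
    _ = t - (t-c) := by omega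
    _ ≤ c := by omega

private lemma meas_set_nat' {Ω : Type*} [MeasurableSpace Ω] (f : Ω → ℕ) (hf : Measurable f)
    (S : Set ℕ) : MeasurableSet (f ⁻¹' S) := hf (Set.to_countable S).measurableSet

private lemma sum_prob_le' {Ω : Type*} [MeasurableSpace Ω] (μ : Measure Ω) [IsProbabilityMeasure μ]
    (f : Ω → ℕ) (hf : Measurable f) (hint : Integrable (fun ω => (f ω : ℝ)) μ) (t : ℕ) :
    ∑ s ∈ Finset.Icc 1 (t-1), (μ {ω | t ≤ s + f ω}).toReal ≤ ∫ ω, (f ω : ℝ) ∂μ := by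
  classical
  have hSmeas : ∀ s : ℕ, MeasurableSet {ω | t ≤ s + f ω} := fun s =>
    meas_set_nat' f hf {k | t ≤ s + k}
  have hind : ∀ s : ℕ, Integrable (fun ω => if t ≤ s + f ω then (1:ℝ) else 0) μ := by
    intro s
    have h : (fun ω => if t ≤ s + f ω then (1:ℝ) else 0)
        = Set.indicator {ω | t ≤ s + f ω} (fun _ => (1:ℝ)) := by
      funext ω; simp [Set.indicator_apply, Set.mem_setOf_eq]
    rw [h]
    exact (integrable_const (1:ℝ)).indicator (hSmeas s)
  have heq : ∀ s : ℕ, (μ {ω | t ≤ s + f ω}).toReal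
      = ∫ ω, (if t ≤ s + f ω then (1:ℝ) else 0) ∂μ := by
    intro s
    have h : (fun ω => if t ≤ s + f ω then (1:ℝ) else 0)
        = Set.indicator {ω | t ≤ s + f ω} (fun _ => (1:ℝ)) := by
      funext ω; simp [Set.indicator_apply, Set.mem_setOf_eq]
    rw [h, integral_indicator_const _ (hSmeas s), smul_eq_mul, mul_one]
    rfl
  calc ∑ s ∈ Finset.Icc 1 (t-1), (μ {ω | t ≤ s + f ω}).toReal
      = ∫ ω, (∑ s ∈ Finset.Icc 1 (t-1), if t ≤ s + f ω then (1:ℝ) else 0) ∂μ := by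
        rw [integral_finset_sum _ (fun s _ => hind s)]
        exact Finset.sum_congr rfl (fun s _ => heq s)
    _ ≤ ∫ ω, (f ω : ℝ) ∂μ := by
        apply integral_mono (integrable_finset_sum _ (fun s _ => hind s)) hint
        intro ω
        have h := count_bound' t (f ω)
        have h2 : ((∑ s ∈ Finset.Icc 1 (t-1), if t ≤ s + f ω then 1 else 0 : ℕ) : ℝ)
            ≤ ((f ω : ℕ) : ℝ) := Nat.cast_le.mpr h
        push_cast at h2
        simpa using h2

private lemma tail_bound' {Ω : Type*} [MeasurableSpace Ω] (μ : Measure Ω) [IsProbabilityMeasure μ]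
    (τ : ℕ → Ω → ℕ) (hmeas : ∀ s, Measurable (τ s))
    (hindep : iIndepFun τ μ)
    (hident : ∀ s, Measure.map (τ s) μ = Measure.map (τ 1) μ)
    (m : ℝ) (hm : ∀ t : ℕ, ∑ s ∈ Finset.Icc 1 (t-1), (μ {ω | t ≤ s + τ 1 ω}).toReal ≤ m)
    (lam : ℝ) (hlam : 0 ≤ lam) (a : ℝ) (t : ℕ) :
    (μ {ω | a ≤ ∑ s ∈ Finset.Icc 1 (t-1), if t ≤ s + τ s ω then (1:ℝ) else 0}).toReal
      ≤ Real.exp (m * (Real.exp lam - 1) - lam * a) := by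
  classical
  set X : ℕ → Ω → ℝ := fun s => (fun k => if t ≤ s + k then (1:ℝ) else 0) ∘ τ s with hX
  have hXmeas : ∀ s, Measurable (X s) := fun s =>
    (measurable_of_countable _).comp (hmeas s)
  have hXindep : iIndepFun X μ :=
    hindep.comp (fun s k => if t ≤ s + k then (1:ℝ) else 0)
      (fun s => measurable_of_countable _)
  have hSmeas : ∀ s : ℕ, MeasurableSet {ω | t ≤ s + τ s ω} := fun s =>
    meas_set_nat' (τ s) (hmeas s) {k | t ≤ s + k}
  have hexp_eq : ∀ s : ℕ, (fun ω => Real.exp (lam * X s ω))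
      = fun ω => Set.indicator {ω | t ≤ s + τ s ω} (fun _ => Real.exp lam - 1) ω + 1 := by
    intro s
    funext ω
    by_cases h : t ≤ s + τ s ω <;>
      simp [hX, Set.indicator_apply, Set.mem_setOf_eq, h]
  have hexp_int : ∀ s : ℕ, Integrable (fun ω => Real.exp (lam * X s ω)) μ := by
    intro s
    rw [hexp_eq s]
    exact ((integrable_const _).indicator (hSmeas s)).add (integrable_const 1)
  have hmgf : ∀ s : ℕ, mgf (X s) μ lam
      = (μ {ω | t ≤ s + τ s ω}).toReal * (Real.exp lam - 1) + 1 := by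
    intro s
    rw [mgf, hexp_eq s, integral_add ((integrable_const _).indicator (hSmeas s))
      (integrable_const 1), integral_indicator_const _ (hSmeas s), integral_const]
    simp [smul_eq_mul, measureReal_def]
  have hid : ∀ s : ℕ, μ {ω | t ≤ s + τ s ω} = μ {ω | t ≤ s + τ 1 ω} := by
    intro s
    have h1 : {ω | t ≤ s + τ s ω} = τ s ⁻¹' {k | t ≤ s + k} := rfl
    have h2 : {ω | t ≤ s + τ 1 ω} = τ 1 ⁻¹' {k | t ≤ s + k} := rfl
    rw [h1, h2, ← Measure.map_apply (hmeas s) (Set.to_countable _).measurableSet,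
      ← Measure.map_apply (hmeas 1) (Set.to_countable _).measurableSet, hident s]
  have hchern := measure_ge_le_exp_mul_mgf (μ := μ) (X := ∑ s ∈ Finset.Icc 1 (t-1), X s)
    a hlam (hXindep.integrable_exp_mul_sum hXmeas (fun s _ => hexp_int s))
  have hset : {ω | a ≤ (∑ s ∈ Finset.Icc 1 (t-1), X s) ω}
      = {ω | a ≤ ∑ s ∈ Finset.Icc 1 (t-1), if t ≤ s + τ s ω then (1:ℝ) else 0} := by
    ext ω; simp [Finset.sum_apply, hX]
  rw [hset] at hchern
  refine hchern.trans ?_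
  rw [hXindep.mgf_sum hXmeas]
  have hprod : ∏ s ∈ Finset.Icc 1 (t-1), mgf (X s) μ lam
      ≤ Real.exp ((Real.exp lam - 1) * m) := by
    calc ∏ s ∈ Finset.Icc 1 (t-1), mgf (X s) μ lam
        ≤ ∏ s ∈ Finset.Icc 1 (t-1),
            Real.exp ((μ {ω | t ≤ s + τ s ω}).toReal * (Real.exp lam - 1)) := by
          apply Finset.prod_le_prod (fun s _ => mgf_nonneg)
          intro s _
          rw [hmgf s]
          exact Real.add_one_le_exp _
      _ = Real.exp (∑ s ∈ Finset.Icc 1 (t-1),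
            (μ {ω | t ≤ s + τ s ω}).toReal * (Real.exp lam - 1)) := (Real.exp_sum _ _).symm
      _ ≤ Real.exp ((Real.exp lam - 1) * m) := by
          apply Real.exp_le_exp.mpr
          have h1 : ∑ s ∈ Finset.Icc 1 (t-1),
              (μ {ω | t ≤ s + τ s ω}).toReal * (Real.exp lam - 1)
              = (∑ s ∈ Finset.Icc 1 (t-1), (μ {ω | t ≤ s + τ 1 ω}).toReal)
                  * (Real.exp lam - 1) := by
            rw [Finset.sum_mul]
            exact Finset.sum_congr rfl (fun s _ => by rw [hid s])
          rw [h1, mul_comm]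
          apply mul_le_mul_of_nonneg_left (hm t)
          have := Real.one_le_exp hlam
          linarith
  calc Real.exp (-lam * a) * ∏ s ∈ Finset.Icc 1 (t-1), mgf (X s) μ lam
      ≤ Real.exp (-lam * a) * Real.exp ((Real.exp lam - 1) * m) := by
        apply mul_le_mul_of_nonneg_left hprod (Real.exp_nonneg _)
    _ = Real.exp (m * (Real.exp lam - 1) - lam * a) := by
        rw [← Real.exp_add]; ring_nf

private lemma measurable_finset_sup_nat' {Ω : Type*} [MeasurableSpace Ω] (s : Finset ℕ)
    (f : ℕ → Ω → ℕ) (hf : ∀ t, Measurable (f t)) :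
    Measurable (fun ω => s.sup (fun t => f t ω)) := by
  classical
  induction s using Finset.induction_on with
  | empty => simp only [Finset.sup_empty]; exact measurable_const
  | insert a s' hns ih =>
    simp only [Finset.sup_insert]
    exact (hf a).max ih

end AuxLemmas

/-- For i.i.d. nonnegative integer delays `τ₁,…,τ_n` (`n ≥ 2`) with finite
mean `m = E[τ₁]`, the maximum number of outstanding feedbacks
`G*_n = max_{1 ≤ t ≤ n} G_t`, where `G_t = ∑_{s=1}^{t-1} 1{s + τ_s ≥ t}`, satisfies
`E[G*_n] ≤ m + 2 log n + √(4 m log n) + 1`. -/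
theorem expected_max_outstanding_le
    {Ω : Type*} [MeasurableSpace Ω] (μ : Measure Ω) [IsProbabilityMeasure μ]
    (n : ℕ) (hn : 2 ≤ n) (τ : ℕ → Ω → ℕ)
    (hmeas : ∀ s, Measurable (τ s))
    (hindep : iIndepFun τ μ)
    (hident : ∀ s, Measure.map (τ s) μ = Measure.map (τ 1) μ)
    (hint : Integrable (fun ω => (τ 1 ω : ℝ)) μ)
    (m : ℝ) (hm : m = μ[fun ω => (τ 1 ω : ℝ)]) :
    μ[fun ω => (((Finset.Icc 1 n).sup (fun t =>
        ∑ s ∈ Finset.Icc 1 (t - 1), if t ≤ s + τ s ω then 1 else 0) : ℕ) : ℝ)]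
      ≤ m + 2 * Real.log n + Real.sqrt (4 * m * Real.log n) + 1 := by
  classical
  set G : ℕ → Ω → ℕ := fun t ω => ∑ s ∈ Finset.Icc 1 (t - 1), if t ≤ s + τ s ω then 1 else 0
    with hGdef
  have hn1 : (1:ℝ) < n := by exact_mod_cast (by omega : 1 < n)
  have hnpos : (0:ℝ) < n := by linarith
  have hlogn : 0 < Real.log n := Real.log_pos hn1
  have hm0 : 0 ≤ m := by
    rw [hm]
    exact integral_nonneg (fun ω => Nat.cast_nonneg _)
  -- measurability of G
  have hGmeas : ∀ t, Measurable (G t) := by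
    intro t
    apply Finset.measurable_sum
    intro s _
    exact (measurable_of_countable (fun k => if t ≤ s + k then 1 else 0)).comp (hmeas s)
  have hGstarmeas : Measurable (fun ω => (Finset.Icc 1 n).sup (fun t => G t ω)) :=
    measurable_finset_sup_nat' _ G hGmeas
  -- bound G* ≤ n
  have hGle : ∀ ω t, G t ω ≤ t - 1 := by
    intro ω t
    calc G t ω ≤ ∑ s ∈ Finset.Icc 1 (t-1), 1 := by
          apply Finset.sum_le_sum
          intro s _
          split <;> simp
      _ = t - 1 := by simp [Nat.card_Icc]
  have hGstarle : ∀ ω, (Finset.Icc 1 n).sup (fun t => G t ω) ≤ n := by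
    intro ω
    apply Finset.sup_le
    intro t ht
    rw [Finset.mem_Icc] at ht
    exact (hGle ω t).trans (by omega)
  have hGint : Integrable (fun ω => (((Finset.Icc 1 n).sup (fun t => G t ω) : ℕ) : ℝ)) μ := by
    have hM : Measurable (fun ω => (((Finset.Icc 1 n).sup (fun t => G t ω) : ℕ) : ℝ)) :=
      (measurable_of_countable _).comp hGstarmeas
    apply Integrable.mono' (integrable_const (n:ℝ)) hM.aestronglyMeasurable
    filter_upwards with ω
    rw [Real.norm_eq_abs, abs_of_nonneg (Nat.cast_nonneg _)]
    exact Nat.cast_le.mpr (hGstarle ω)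
  have hcast : ∀ t ω, ((G t ω : ℕ) : ℝ)
      = ∑ s ∈ Finset.Icc 1 (t-1), if t ≤ s + τ s ω then (1:ℝ) else 0 := by
    intro t ω
    rw [hGdef]
    push_cast
    rfl
  rcases eq_or_lt_of_le hm0 with hm0' | hmpos
  · -- m = 0 : τ = 0 a.e.
    have hae1 : (fun ω => (τ 1 ω : ℝ)) =ᵐ[μ] 0 := by
      rw [← integral_eq_zero_iff_of_nonneg (fun ω => Nat.cast_nonneg _) hint]
      exact hm ▸ hm0'.symm
    have hnull1 : μ {ω | τ 1 ω ≠ 0} = 0 := by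
      have := ae_iff.mp hae1
      simpa using this
    have hnulls : ∀ s, μ {ω | τ s ω ≠ 0} = 0 := by
      intro s
      have h1 : {ω | τ s ω ≠ 0} = τ s ⁻¹' {k | k ≠ 0} := rfl
      have h2 : {ω | τ 1 ω ≠ 0} = τ 1 ⁻¹' {k | k ≠ 0} := rfl
      rw [h1, ← Measure.map_apply (hmeas s) (Set.to_countable _).measurableSet, hident s,
        Measure.map_apply (hmeas 1) (Set.to_countable _).measurableSet, ← h2, hnull1]
    have haeall : ∀ᵐ ω ∂μ, ∀ s, τ s ω = 0 := by
      rw [ae_all_iff]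
      intro s
      rw [ae_iff]
      simpa using hnulls s
    have hGzero : (fun ω => (((Finset.Icc 1 n).sup (fun t => G t ω) : ℕ) : ℝ)) =ᵐ[μ] 0 := by
      filter_upwards [haeall] with ω hω
      have : (Finset.Icc 1 n).sup (fun t => G t ω) = 0 := by
        apply Nat.le_zero.mp
        apply Finset.sup_le
        intro t ht
        rw [Finset.mem_Icc] at ht
        have : G t ω = 0 := by
          apply Finset.sum_eq_zero
          intro s hs
          rw [Finset.mem_Icc] at hs
          rw [hω s]
          have hlt : ¬ t ≤ s := by omega
          simp [hlt]
        omega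
      simp [this]
    calc μ[fun ω => (((Finset.Icc 1 n).sup (fun t => G t ω) : ℕ) : ℝ)]
        = ∫ ω, (0:ℝ) ∂μ := integral_congr_ae hGzero
      _ = 0 := integral_zero _ _
      _ ≤ m + 2 * Real.log n + Real.sqrt (4 * m * Real.log n) + 1 := by
          have h4 : Real.sqrt (4 * m * Real.log n) = 0 := by
            rw [← hm0']
            simp
          rw [h4, ← hm0']
          linarith [hlogn]
  · -- m > 0
    set b : ℝ := 2 * Real.log n with hb
    have hbpos : 0 < b := by positivity
    set p : ℝ := Real.sqrt (2*m*b) with hp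
    have hp0 : 0 ≤ p := Real.sqrt_nonneg _
    set x : ℝ := b + p with hx
    have hxpos : 0 < x := by positivity
    set a : ℝ := m + x with ha
    have hapos : 0 < a := by positivity
    set lam : ℝ := Real.log (1 + x/m) with hlam
    have hlam0 : 0 ≤ lam := Real.log_nonneg (le_add_of_nonneg_right (by positivity))
    -- sum of tail probs ≤ m
    have hsum : ∀ t : ℕ, ∑ s ∈ Finset.Icc 1 (t-1), (μ {ω | t ≤ s + τ 1 ω}).toReal ≤ m := by
      intro t
      calc ∑ s ∈ Finset.Icc 1 (t-1), (μ {ω | t ≤ s + τ 1 ω}).toReal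
          ≤ ∫ ω, (τ 1 ω : ℝ) ∂μ := sum_prob_le' μ (τ 1) (hmeas 1) hint t
        _ = m := hm.symm
    -- per-t tail bound
    have hexpb : m * (Real.exp lam - 1) - lam * a ≤ -b := exponent_bound' hmpos hbpos
    have htail : ∀ t : ℕ,
        (μ {ω | a ≤ ∑ s ∈ Finset.Icc 1 (t-1), if t ≤ s + τ s ω then (1:ℝ) else 0}).toReal
          ≤ Real.exp (-b) := by
      intro t
      refine (tail_bound' μ τ hmeas hindep hident m hsum lam hlam0 a t).trans ?_
      exact Real.exp_le_exp.mpr hexpb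
    -- the bad event
    set S : ℕ → Set Ω := fun t =>
      {ω | a ≤ ∑ s ∈ Finset.Icc 1 (t-1), if t ≤ s + τ s ω then (1:ℝ) else 0} with hS
    have hSmeas : ∀ t, MeasurableSet (S t) := by
      intro t
      apply measurableSet_le measurable_const
      apply Finset.measurable_sum
      intro s _
      exact (measurable_of_countable (fun k => if t ≤ s + k then (1:ℝ) else 0)).comp (hmeas s)
    set bad : Set Ω := ⋃ t ∈ Finset.Icc 1 n, S t with hbad
    have hbadmeas : MeasurableSet bad := by
      apply Finset.measurableSet_biUnion
      intro t _
      exact hSmeas t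
    -- pointwise bound
    have hpoint : ∀ ω, (((Finset.Icc 1 n).sup (fun t => G t ω) : ℕ) : ℝ)
        ≤ a + Set.indicator bad (fun _ => (n:ℝ)) ω := by
      intro ω
      by_cases hω : ω ∈ bad
      · rw [Set.indicator_of_mem hω]
        have h1 : (((Finset.Icc 1 n).sup (fun t => G t ω) : ℕ) : ℝ) ≤ n := by
          exact_mod_cast hGstarle ω
        linarith
      · rw [Set.indicator_of_notMem hω, add_zero]
        have hne : (Finset.Icc 1 n).Nonempty := by
          rw [Finset.nonempty_Icc]; omega
        obtain ⟨t₀, ht₀, hsup⟩ := Finset.exists_mem_eq_sup _ hne (fun t => G t ω)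
        rw [hsup]
        have hnotin : ω ∉ S t₀ := by
          intro hmem
          exact hω (Set.mem_biUnion ht₀ hmem)
        rw [hS] at hnotin
        simp only [Set.mem_setOf_eq, not_le] at hnotin
        rw [hcast t₀ ω] at *
        linarith [hnotin]
    -- integrate
    have hrint : Integrable (fun ω => a + Set.indicator bad (fun _ => (n:ℝ)) ω) μ :=
      (integrable_const a).add ((integrable_const _).indicator hbadmeas)
    have hbadle : (μ bad).toReal ≤ n * Real.exp (-b) := by
      have h1 : μ bad ≤ ∑ t ∈ Finset.Icc 1 n, μ (S t) := measure_biUnion_finset_le _ _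
      have h2 : (μ bad).toReal ≤ (∑ t ∈ Finset.Icc 1 n, μ (S t)).toReal := by
        apply ENNReal.toReal_mono _ h1
        apply ne_of_lt
        apply lt_of_le_of_lt (Finset.sum_le_sum (fun t _ => prob_le_one (μ := μ) (s := S t)))
        simp [ENNReal.sum_lt_top]
      rw [ENNReal.toReal_sum (fun t _ => measure_ne_top μ _)] at h2
      refine h2.trans ?_
      calc ∑ t ∈ Finset.Icc 1 n, (μ (S t)).toReal
          ≤ ∑ t ∈ Finset.Icc 1 n, Real.exp (-b) := Finset.sum_le_sum (fun t _ => htail t)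
        _ = n * Real.exp (-b) := by
            rw [Finset.sum_const, Nat.card_Icc]
            simp [nsmul_eq_mul]
    have hexpnb : Real.exp (-b) = 1 / ((n:ℝ) * n) := by
      rw [hb, Real.exp_neg]
      rw [show (2:ℝ) * Real.log n = Real.log n + Real.log n by ring, Real.exp_add,
        Real.exp_log hnpos]
      simp
    calc μ[fun ω => (((Finset.Icc 1 n).sup (fun t => G t ω) : ℕ) : ℝ)]
        ≤ ∫ ω, (a + Set.indicator bad (fun _ => (n:ℝ)) ω) ∂μ :=
          integral_mono hGint hrint hpoint
      _ = a + (μ bad).toReal * n := by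
          rw [integral_add (integrable_const a) ((integrable_const _).indicator hbadmeas),
            integral_const, integral_indicator_const _ hbadmeas]
          simp [smul_eq_mul, measureReal_def]
      _ ≤ a + 1 := by
          have : (μ bad).toReal * n ≤ (n * Real.exp (-b)) * n :=
            mul_le_mul_of_nonneg_right hbadle hnpos.le
          have h2 : (n * Real.exp (-b)) * (n:ℝ) = 1 := by
            rw [hexpnb]
            field_simp
          linarith
      _ ≤ m + 2 * Real.log n + Real.sqrt (4 * m * Real.log n) + 1 := by
          rw [ha, hx, hb, hp]
          rw [show 2*m*(2*Real.log n) = 4 * m * Real.log n by ring]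
          linarith
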